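/- Let μ, m, ν be probability measures on a measurable space with ν ≪ m and m ≪ μ. Set g = dm/dμ and h = dν/dm, and assume ∫ g dm < ∞ and Ent(ν|m) = ∫ h log h dm < ∞. Then for every measurable function f with ε ≤ f ≤ K for some constants 0 < ε ≤ K < ∞, one has ∫ log f dν ≤ log ∫ f dμ + log ∫ g dm + 2·Ent(ν|m). -/

import Mathlib

open MeasureTheory

/-- Gibbs / Donsker–Varadhan style inequality for a bounded positive function:
`∫ log f dν ≤ Ent(ν|m) + log ∫ f dm`. -/
lemma gibbs_aux {α : Type*} [MeasurableSpace α] (m ν : Measure α)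
    [IsProbabilityMeasure m] [IsProbabilityMeasure ν]
    (hνm : ν ≪ m) (hent : Integrable (llr ν m) ν)
    (f : α → ℝ) (hf : Measurable f)
    (ε K : ℝ) (hε : 0 < ε)
    (hfl : ∀ x, ε ≤ f x) (hfu : ∀ x, f x ≤ K) :
    ∫ x, Real.log (f x) ∂ν
      ≤ (∫ x, llr ν m x ∂ν) + Real.log (∫ x, f x ∂m) := by
  set K' := max K ε with hK'
  have hεK' : ε ≤ K' := le_max_right _ _
  have hfu' : ∀ x, f x ≤ K' := fun x => (hfu x).trans (le_max_left _ _)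
  have hfpos : ∀ x, 0 < f x := fun x => hε.trans_le (hfl x)
  have hfm_int : Integrable f m := by
    refine (integrable_const K').mono' hf.aestronglyMeasurable ?_
    filter_upwards with x
    rw [Real.norm_of_nonneg (hfpos x).le]
    exact hfu' x
  set C := ∫ x, f x ∂m with hCdef
  have hC : ε ≤ C := by
    have : ∫ _x, ε ∂m ≤ ∫ x, f x ∂m := integral_mono (integrable_const ε) hfm_int hfl
    simpa using this
  have hCpos : 0 < C := hε.trans_le hC
  set h := fun x => (ν.rnDeriv m x).toReal with hdef
  have hmeas_h : Measurable h := (Measure.measurable_rnDeriv ν m).ennreal_toReal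
  set b := fun x => f x / (h x * C) with hbdef
  have hmeas_b : Measurable b := hf.div (hmeas_h.mul measurable_const)
  -- pointwise bound on h • b
  have hhb : ∀ x, h x * b x ≤ f x / C := by
    intro x
    rcases eq_or_ne (h x) 0 with h0 | h0
    · simp only [hbdef, h0, zero_mul]
      exact div_nonneg (hfpos x).le hCpos.le
    · have : h x * b x = f x / C := by
        simp only [hbdef]
        field_simp
      rw [this]
  have hb_nonneg : ∀ x, 0 ≤ b x := fun x =>
    div_nonneg (hfpos x).le (mul_nonneg ENNReal.toReal_nonneg hCpos.le)
  have hhb_nonneg : ∀ x, 0 ≤ h x * b x := fun x =>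
    mul_nonneg ENNReal.toReal_nonneg (hb_nonneg x)
  have hsmul_int : Integrable (fun x => (ν.rnDeriv m x).toReal • b x) m := by
    simp only [smul_eq_mul]
    refine (integrable_const (K' / C)).mono' (hmeas_h.mul hmeas_b).aestronglyMeasurable ?_
    filter_upwards with x
    rw [Real.norm_of_nonneg (hhb_nonneg x)]
    exact (hhb x).trans (by gcongr; exact hfu' x)
  have hb_int : Integrable b ν := (integrable_rnDeriv_smul_iff hνm).mp hsmul_int
  have hib : ∫ x, b x ∂ν ≤ 1 := by
    rw [← integral_rnDeriv_smul hνm]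
    have h1 : ∫ x, (ν.rnDeriv m x).toReal • b x ∂m ≤ ∫ x, f x / C ∂m := by
      refine integral_mono hsmul_int (hfm_int.div_const C) ?_
      intro x
      simpa [smul_eq_mul] using hhb x
    have h2 : ∫ x, f x / C ∂m = 1 := by
      rw [integral_div]
      field_simp
      exact hCdef.symm
    linarith
  have hlogf_int : Integrable (fun x => Real.log (f x)) ν := by
    refine (integrable_const (max |Real.log ε| |Real.log K'|)).mono'
      hf.log.aestronglyMeasurable ?_
    filter_upwards with x
    rw [Real.norm_eq_abs]
    exact abs_le_max_abs_abs (Real.log_le_log hε (hfl x))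
      (Real.log_le_log (hfpos x) (hfu' x))
  -- key pointwise a.e. inequality
  have key : ∀ᵐ x ∂ν, Real.log (f x) - llr ν m x - Real.log C ≤ b x - 1 := by
    filter_upwards [Measure.rnDeriv_pos hνm, hνm.ae_le (Measure.rnDeriv_lt_top ν m)]
      with x hx hxt
    have hhx : 0 < h x := ENNReal.toReal_pos hx.ne' hxt.ne
    have hbx : 0 < b x := by
      have := hfpos x
      positivity
    have hlog : Real.log (b x) = Real.log (f x) - llr ν m x - Real.log C := by
      have hllr : llr ν m x = Real.log (h x) := rfl
      rw [hbdef]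
      rw [Real.log_div (hfpos x).ne' (mul_pos hhx hCpos).ne',
        Real.log_mul hhx.ne' hCpos.ne', hllr]
      ring
    have := Real.log_le_sub_one_of_pos hbx
    linarith [hlog ▸ this]
  have main : ∫ x, (Real.log (f x) - llr ν m x - Real.log C) ∂ν
      ≤ ∫ x, (b x - 1) ∂ν :=
    integral_mono_ae ((hlogf_int.sub hent).sub (integrable_const _))
      (hb_int.sub (integrable_const 1)) key
  have i1 : Integrable (fun x => Real.log (f x) - llr ν m x) ν := hlogf_int.sub hent
  have e1 : ∫ x, (Real.log (f x) - llr ν m x - Real.log C) ∂ν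
      = (∫ x, Real.log (f x) ∂ν) - (∫ x, llr ν m x ∂ν) - Real.log C := by
    rw [integral_sub i1 (integrable_const _), integral_sub hlogf_int hent, integral_const]
    simp [measure_univ]
  have e2 : ∫ x, (b x - 1) ∂ν = (∫ x, b x ∂ν) - 1 := by
    rw [integral_sub hb_int (integrable_const 1), integral_const]
    simp [measure_univ]
  rw [e1, e2] at main
  linarith

theorem three_measure_log_harnack
    {α : Type*} [MeasurableSpace α] (μ m ν : Measure α)
    [IsProbabilityMeasure μ] [IsProbabilityMeasure m] [IsProbabilityMeasure ν]
    (hνm : ν ≪ m) (hmμ : m ≪ μ)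
    (g : α → ℝ) (hg : g = fun x => (m.rnDeriv μ x).toReal)
    (hgint : Integrable g m)
    (hent : Integrable (llr ν m) ν)
    (f : α → ℝ) (hf : Measurable f)
    (ε K : ℝ) (hε : 0 < ε) (hεK : ε ≤ K)
    (hfl : ∀ x, ε ≤ f x) (hfu : ∀ x, f x ≤ K) :
    ∫ x, Real.log (f x) ∂ν
      ≤ Real.log (∫ x, f x ∂μ) + Real.log (∫ x, g x ∂m)
        + 2 * ∫ x, llr ν m x ∂ν := by
  have hfpos : ∀ x, 0 < f x := fun x => hε.trans_le (hfl x)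
  set s := fun x => Real.sqrt (f x) with hsdef
  have hs_meas : Measurable s := hf.sqrt
  have hs_l : ∀ x, Real.sqrt ε ≤ s x := fun x => Real.sqrt_le_sqrt (hfl x)
  have hs_u : ∀ x, s x ≤ Real.sqrt K := fun x => Real.sqrt_le_sqrt (hfu x)
  have hεs : 0 < Real.sqrt ε := Real.sqrt_pos.mpr hε
  -- Gibbs applied to √f
  have h1 := gibbs_aux m ν hνm hent s hs_meas _ _ hεs hs_l hs_u
  -- log f = 2 log √f
  have h2 : ∫ x, Real.log (f x) ∂ν = 2 * ∫ x, Real.log (s x) ∂ν := by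
    rw [← integral_const_mul]
    refine integral_congr_ae (Filter.Eventually.of_forall fun x => ?_)
    show Real.log (f x) = 2 * Real.log (Real.sqrt (f x))
    rw [Real.log_sqrt (hfpos x).le]
    ring
  -- change of measure facts
  have hg_meas : Measurable g := by
    rw [hg]; exact (Measure.measurable_rnDeriv m μ).ennreal_toReal
  have hg_nonneg : ∀ x, 0 ≤ g x := by intro x; rw [hg]; exact ENNReal.toReal_nonneg
  have hchg : ∀ (φ : α → ℝ), ∫ x, g x * φ x ∂μ = ∫ x, φ x ∂m := by
    intro φ
    have := integral_rnDeriv_smul hmμ (f := φ)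
    simpa [hg, smul_eq_mul] using this
  have hgsq : ∫ x, g x ^ (2:ℝ) ∂μ = ∫ x, g x ∂m := by
    rw [← hchg g]
    refine integral_congr_ae (Filter.Eventually.of_forall fun x => ?_)
    show g x ^ (2:ℝ) = g x * g x
    rw [Real.rpow_two, pow_two]
  -- Memℒp facts
  have hof2 : ENNReal.ofReal (2:ℝ) = 2 := by
    rw [ENNReal.ofReal_ofNat]
  have hs_mem : MemLp s (ENNReal.ofReal 2) μ := by
    rw [hof2]
    refine MemLp.mono_exponent (q := ⊤) ?_ le_top
    refine memLp_top_of_bound hs_meas.aestronglyMeasurable (Real.sqrt K) ?_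
    filter_upwards with x
    rw [Real.norm_of_nonneg (Real.sqrt_nonneg _)]
    exact hs_u x
  have hg_sq_int : Integrable (fun x => g x ^ 2) μ := by
    have := (integrable_rnDeriv_smul_iff hmμ (f := g)).mpr hgint
    simp only [hg, smul_eq_mul] at this ⊢
    simpa [pow_two] using this
  have hg_mem : MemLp g (ENNReal.ofReal 2) μ := by
    rw [hof2]
    exact (memLp_two_iff_integrable_sq hg_meas.aestronglyMeasurable).mpr hg_sq_int
  -- Cauchy–Schwarz
  have hpq : Real.HolderConjugate 2 2 := by
    exact Real.HolderConjugate.two_two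
  have hCS : ∫ x, s x ∂m ≤ Real.sqrt (∫ x, f x ∂μ) * Real.sqrt (∫ x, g x ∂m) := by
    rw [← hchg s]
    have := integral_mul_le_Lp_mul_Lq_of_nonneg hpq
      (Filter.Eventually.of_forall hg_nonneg)
      (Filter.Eventually.of_forall fun x => Real.sqrt_nonneg (f x)) hg_mem hs_mem
    have hssq : ∫ x, s x ^ (2:ℝ) ∂μ = ∫ x, f x ∂μ := by
      refine integral_congr_ae (Filter.Eventually.of_forall fun x => ?_)
      show Real.sqrt (f x) ^ (2:ℝ) = f x
      rw [Real.rpow_two, Real.sq_sqrt (hfpos x).le]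
    rw [hssq, hgsq] at this
    rw [Real.sqrt_eq_rpow, Real.sqrt_eq_rpow]
    linarith [this]
  -- positivity of the middle integral
  have hsm_int : Integrable s m := by
    refine (integrable_const (Real.sqrt K)).mono' hs_meas.aestronglyMeasurable ?_
    filter_upwards with x
    rw [Real.norm_of_nonneg (Real.sqrt_nonneg _)]
    exact hs_u x
  have hsm_pos : 0 < ∫ x, s x ∂m := by
    have : ∫ _x, Real.sqrt ε ∂m ≤ ∫ x, s x ∂m :=
      integral_mono (integrable_const _) hsm_int hs_l
    simp only [integral_const, measure_univ, ENNReal.toReal_one, probReal_univ, one_smul] at this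
    linarith
  -- nonnegativity of the two outer integrals
  have hfμ_nonneg : 0 ≤ ∫ x, f x ∂μ := integral_nonneg fun x => (hfpos x).le
  have hgm_nonneg : 0 ≤ ∫ x, g x ∂m := integral_nonneg hg_nonneg
  have hlog_le : Real.log (∫ x, s x ∂m)
      ≤ Real.log (∫ x, f x ∂μ) / 2 + Real.log (∫ x, g x ∂m) / 2 := by
    calc Real.log (∫ x, s x ∂m)
        ≤ Real.log (Real.sqrt (∫ x, f x ∂μ) * Real.sqrt (∫ x, g x ∂m)) :=
          Real.log_le_log hsm_pos hCS
      _ = Real.log (∫ x, f x ∂μ) / 2 + Real.log (∫ x, g x ∂m) / 2 := by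
          have hA : (0:ℝ) < Real.sqrt (∫ x, f x ∂μ) := by
            by_contra hcon
            push_neg at hcon
            nlinarith [Real.sqrt_nonneg (∫ x, f x ∂μ), Real.sqrt_nonneg (∫ x, g x ∂m)]
          have hB : (0:ℝ) < Real.sqrt (∫ x, g x ∂m) := by
            by_contra hcon
            push_neg at hcon
            nlinarith [Real.sqrt_nonneg (∫ x, f x ∂μ), Real.sqrt_nonneg (∫ x, g x ∂m)]
          rw [Real.log_mul hA.ne' hB.ne', Real.log_sqrt hfμ_nonneg,
            Real.log_sqrt hgm_nonneg]
  linarith [h1, h2, hlog_le]
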